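/- Let d ≥ 1 be an integer and let φ, ψ : ℕ → [0,∞) be nonincreasing functions. Then for every v ∈ ℤ^d: Σ_{w ∈ ℤ^d} φ(|w|)·ψ(|v − w|) ≤ Σ_{w ∈ ℤ^d} φ(|w|)·ψ(|w|), where |x| denotes the ℓ^∞ norm max_{1≤i≤d} |x_i| of x ∈ ℤ^d and both sums are understood in [0,∞]. -/

import Mathlib

open scoped ENNReal

/-- The ℓ∞ norm of a point of ℤ^d. -/
def normInf {d : ℕ} (x : Fin d → ℤ) : ℤ :=
  ((Finset.univ.sup fun i => (x i).natAbs : ℕ) : ℤ)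

/-- The ℓ∞ norm as a natural number. -/
def nnInf {d : ℕ} (x : Fin d → ℤ) : ℕ :=
  Finset.univ.sup fun i => (x i).natAbs

lemma toNat_normInf {d : ℕ} (x : Fin d → ℤ) : (normInf x).toNat = nnInf x := by
  simp [normInf, nnInf]

lemma nnInf_le_iff {d : ℕ} {x : Fin d → ℤ} {a : ℕ} :
    nnInf x ≤ a ↔ ∀ i, (x i).natAbs ≤ a := by
  simp [nnInf, Finset.sup_le_iff]

lemma nnInf_neg {d : ℕ} (x : Fin d → ℤ) : nnInf (-x) = nnInf x := by
  simp [nnInf]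

/-- Layer-cake decomposition of an antitone `ℕ → ℝ≥0∞` function (coerced from NNReal). -/
lemma antitone_decomp (φ : ℕ → NNReal) (hφ : Antitone φ) (n : ℕ) :
    (φ n : ℝ≥0∞) = (⨅ k, (φ k : ℝ≥0∞)) +
      ∑' k : ℕ, (if n ≤ k then ((φ k : ℝ≥0∞) - (φ (k + 1) : ℝ≥0∞)) else 0) := by
  have hL : (⨅ k, (φ k : ℝ≥0∞)) ≤ (φ n : ℝ≥0∞) := iInf_le _ n
  have hreindex : (∑' k : ℕ, (if n ≤ k then ((φ k : ℝ≥0∞) - (φ (k + 1) : ℝ≥0∞)) else 0))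
      = ∑' j : ℕ, ((φ (n + j) : ℝ≥0∞) - (φ (n + j + 1) : ℝ≥0∞)) := by
    rw [← Function.Injective.tsum_eq (g := fun j : ℕ => n + j)
        (add_right_injective n)
        (f := fun k => if n ≤ k then ((φ k : ℝ≥0∞) - (φ (k + 1) : ℝ≥0∞)) else 0)
        (by
          intro k hk
          simp only [Function.mem_support] at hk
          by_cases h : n ≤ k
          · exact ⟨k - n, by simp; omega⟩
          · simp [h] at hk)]
    refine tsum_congr fun j => ?_
    simp
  have htel : ∀ N : ℕ, (∑ j ∈ Finset.range N, ((φ (n + j) : ℝ≥0∞) - (φ (n + j + 1) : ℝ≥0∞)))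
      = (φ n : ℝ≥0∞) - (φ (n + N) : ℝ≥0∞) := by
    intro N
    induction N with
    | zero => simp
    | succ N ih =>
      rw [Finset.sum_range_succ, ih]
      exact tsub_add_tsub_cancel (by exact_mod_cast hφ (Nat.le_add_right n N))
        (by exact_mod_cast hφ (by omega : n + N ≤ n + (N + 1)))
  have hiInf : (⨅ N : ℕ, (φ (n + N) : ℝ≥0∞)) = ⨅ k, (φ k : ℝ≥0∞) := by
    refine le_antisymm (le_iInf fun k => ?_) (le_iInf fun N => iInf_le _ (n + N))
    exact (iInf_le _ k).trans (by exact_mod_cast hφ (Nat.le_add_left k n))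
  rw [hreindex, ENNReal.tsum_eq_iSup_nat]
  simp_rw [htel]
  rw [← ENNReal.sub_iInf, hiInf, add_comm]
  exact (tsub_add_cancel_of_le hL).symm

/-- Shift invariance of sums over ℤ^d. -/
lemma tsum_shift {d : ℕ} (h : (Fin d → ℤ) → ℝ≥0∞) (v : Fin d → ℤ) :
    (∑' w : Fin d → ℤ, h (v - w)) = ∑' w : Fin d → ℤ, h w :=
  (Equiv.subLeft v).tsum_eq h

/-- The 1D key arithmetic fact. -/
lemma key_arith (a b : ℕ) (v x : ℤ) (hx : x.natAbs ≤ a) (hv : (v - x).natAbs ≤ b) :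
    (x - (min (a : ℤ) (v + b) - min (a : ℤ) (b : ℤ))).natAbs ≤ min a b := by
  omega

/-- The counting inequality: the box intersection count is maximized at `v = 0`. -/
lemma count_le {d : ℕ} (a b : ℕ) (v : Fin d → ℤ) :
    (∑' w : Fin d → ℤ, if nnInf w ≤ a ∧ nnInf (v - w) ≤ b then (1 : ℝ≥0∞) else 0)
      ≤ ∑' w : Fin d → ℤ, if nnInf w ≤ a ∧ nnInf w ≤ b then (1 : ℝ≥0∞) else 0 := by
  classical
  set c : Fin d → ℤ := fun i => min (a : ℤ) (v i + b) - min (a : ℤ) (b : ℤ) with hc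
  refine ENNReal.summable.tsum_le_tsum_of_inj (fun w => w - c)
    (fun x y hxy => by
      have h2 : x - c = y - c := hxy
      have h3 : x - c + c = y - c + c := by rw [h2]
      simpa using h3)
    (fun _ _ => zero_le) (fun w => ?_) ENNReal.summable
  by_cases h : nnInf w ≤ a ∧ nnInf (v - w) ≤ b
  · rw [if_pos h, if_pos]
    constructor
    · rw [nnInf_le_iff]
      intro i
      have h1 := nnInf_le_iff.mp h.1 i
      have h2 := nnInf_le_iff.mp h.2 i
      simp only [Pi.sub_apply, hc] at h2 ⊢
      have := key_arith a b (v i) (w i) h1 h2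
      omega
    · rw [nnInf_le_iff]
      intro i
      have h1 := nnInf_le_iff.mp h.1 i
      have h2 := nnInf_le_iff.mp h.2 i
      simp only [Pi.sub_apply, hc] at h2 ⊢
      have := key_arith a b (v i) (w i) h1 h2
      omega
  · rw [if_neg h]
    exact zero_le

theorem rearrangement_inequality (d : ℕ) (hd : 1 ≤ d)
    (φ ψ : ℕ → NNReal) (hφ : Antitone φ) (hψ : Antitone ψ) (v : Fin d → ℤ) :
    (∑' w : Fin d → ℤ,
        ((φ (normInf w).toNat : ℝ≥0∞) * (ψ (normInf (v - w)).toNat : ℝ≥0∞))) ≤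
      ∑' w : Fin d → ℤ,
        ((φ (normInf w).toNat : ℝ≥0∞) * (ψ (normInf w).toNat : ℝ≥0∞)) := by
  classical
  set Lφ : ℝ≥0∞ := ⨅ k, (φ k : ℝ≥0∞) with hLφ
  set Lψ : ℝ≥0∞ := ⨅ k, (ψ k : ℝ≥0∞) with hLψ
  set δ : ℕ → ℝ≥0∞ := fun k => (φ k : ℝ≥0∞) - (φ (k + 1) : ℝ≥0∞) with hδ
  set ε : ℕ → ℝ≥0∞ := fun k => (ψ k : ℝ≥0∞) - (ψ (k + 1) : ℝ≥0∞) with hε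
  set f : ℕ → ℝ≥0∞ := fun n => ∑' k : ℕ, (if n ≤ k then δ k else 0) with hf
  set g : ℕ → ℝ≥0∞ := fun n => ∑' k : ℕ, (if n ≤ k then ε k else 0) with hg
  have hφf : ∀ n, (φ n : ℝ≥0∞) = Lφ + f n := fun n => antitone_decomp φ hφ n
  have hψg : ∀ n, (ψ n : ℝ≥0∞) = Lψ + g n := fun n => antitone_decomp ψ hψ n
  -- the main convolution term
  set M : (Fin d → ℤ) → ℝ≥0∞ :=
    fun u => ∑' w : Fin d → ℤ, f (nnInf w) * g (nnInf (u - w)) with hM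
  -- decomposition of the full sum
  have key : ∀ u : Fin d → ℤ,
      (∑' w : Fin d → ℤ, ((φ (nnInf w) : ℝ≥0∞) * (ψ (nnInf (u - w)) : ℝ≥0∞)))
      = ((∑' _w : Fin d → ℤ, Lφ * Lψ)
          + Lφ * (∑' w : Fin d → ℤ, g (nnInf w))
          + Lψ * (∑' w : Fin d → ℤ, f (nnInf w)))
          + M u := by
    intro u
    have expand : ∀ w : Fin d → ℤ,
        ((φ (nnInf w) : ℝ≥0∞) * (ψ (nnInf (u - w)) : ℝ≥0∞))
        = ((Lφ * Lψ + Lφ * g (nnInf (u - w))) + Lψ * f (nnInf w))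
            + f (nnInf w) * g (nnInf (u - w)) := by
      intro w
      rw [hφf, hψg]
      ring
    calc (∑' w : Fin d → ℤ, ((φ (nnInf w) : ℝ≥0∞) * (ψ (nnInf (u - w)) : ℝ≥0∞)))
        = ∑' w : Fin d → ℤ, (((Lφ * Lψ + Lφ * g (nnInf (u - w))) + Lψ * f (nnInf w))
            + f (nnInf w) * g (nnInf (u - w))) := tsum_congr expand
      _ = ((∑' _w : Fin d → ℤ, Lφ * Lψ)
            + ∑' w : Fin d → ℤ, Lφ * g (nnInf (u - w)))
            + (∑' w : Fin d → ℤ, Lψ * f (nnInf w))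
            + M u := by
          rw [ENNReal.tsum_add, ENNReal.tsum_add, ENNReal.tsum_add]
      _ = ((∑' _w : Fin d → ℤ, Lφ * Lψ)
            + Lφ * (∑' w : Fin d → ℤ, g (nnInf w))
            + Lψ * (∑' w : Fin d → ℤ, f (nnInf w)))
            + M u := by
          rw [ENNReal.tsum_mul_left, ENNReal.tsum_mul_left, ENNReal.tsum_mul_left,
            tsum_shift (fun w => g (nnInf w)) u]
  -- the main term is maximized at 0
  have hMle : M v ≤ M 0 := by
    have hMeq : ∀ u : Fin d → ℤ,
        M u = ∑' a : ℕ, ∑' b : ℕ, (δ a * ε b *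
          ∑' w : Fin d → ℤ, (if nnInf w ≤ a ∧ nnInf (u - w) ≤ b then (1 : ℝ≥0∞) else 0)) := by
      intro u
      have step1 : ∀ w : Fin d → ℤ,
          f (nnInf w) * g (nnInf (u - w))
          = ∑' a : ℕ, ∑' b : ℕ, (δ a * ε b *
              (if nnInf w ≤ a ∧ nnInf (u - w) ≤ b then (1 : ℝ≥0∞) else 0)) := by
        intro w
        rw [hf, hg]
        simp only
        rw [← ENNReal.tsum_mul_right]
        refine tsum_congr fun a => ?_
        rw [← ENNReal.tsum_mul_left]
        refine tsum_congr fun b => ?_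
        by_cases h1 : nnInf w ≤ a <;> by_cases h2 : nnInf (u - w) ≤ b <;>
          simp [h1, h2]
      calc M u = ∑' w : Fin d → ℤ, ∑' a : ℕ, ∑' b : ℕ, (δ a * ε b *
            (if nnInf w ≤ a ∧ nnInf (u - w) ≤ b then (1 : ℝ≥0∞) else 0)) :=
          tsum_congr step1
        _ = ∑' a : ℕ, ∑' w : Fin d → ℤ, ∑' b : ℕ, (δ a * ε b *
            (if nnInf w ≤ a ∧ nnInf (u - w) ≤ b then (1 : ℝ≥0∞) else 0)) :=
          ENNReal.tsum_comm
        _ = ∑' a : ℕ, ∑' b : ℕ, ∑' w : Fin d → ℤ, (δ a * ε b *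
            (if nnInf w ≤ a ∧ nnInf (u - w) ≤ b then (1 : ℝ≥0∞) else 0)) :=
          tsum_congr fun a => ENNReal.tsum_comm
        _ = ∑' a : ℕ, ∑' b : ℕ, (δ a * ε b *
            ∑' w : Fin d → ℤ, (if nnInf w ≤ a ∧ nnInf (u - w) ≤ b then (1 : ℝ≥0∞) else 0)) :=
          tsum_congr fun a => tsum_congr fun b => ENNReal.tsum_mul_left
    rw [hMeq v, hMeq 0]
    refine ENNReal.tsum_le_tsum fun a => ENNReal.tsum_le_tsum fun b => ?_
    refine mul_le_mul_right ?_ (δ a * ε b)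
    refine (count_le a b v).trans_eq (tsum_congr fun w => ?_)
    rw [show (0 : Fin d → ℤ) - w = -w by simp, nnInf_neg]
  -- assemble
  have hsimp : ∀ w : Fin d → ℤ, (normInf w).toNat = nnInf w := toNat_normInf
  calc (∑' w : Fin d → ℤ,
        ((φ (normInf w).toNat : ℝ≥0∞) * (ψ (normInf (v - w)).toNat : ℝ≥0∞)))
      = ∑' w : Fin d → ℤ, ((φ (nnInf w) : ℝ≥0∞) * (ψ (nnInf (v - w)) : ℝ≥0∞)) := by
        refine tsum_congr fun w => by rw [hsimp, hsimp]
    _ = ((∑' _w : Fin d → ℤ, Lφ * Lψ)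
          + Lφ * (∑' w : Fin d → ℤ, g (nnInf w))
          + Lψ * (∑' w : Fin d → ℤ, f (nnInf w)))
          + M v := key v
    _ ≤ ((∑' _w : Fin d → ℤ, Lφ * Lψ)
          + Lφ * (∑' w : Fin d → ℤ, g (nnInf w))
          + Lψ * (∑' w : Fin d → ℤ, f (nnInf w)))
          + M 0 := add_le_add_right hMle _
    _ = ∑' w : Fin d → ℤ, ((φ (nnInf w) : ℝ≥0∞) * (ψ (nnInf ((0 : Fin d → ℤ) - w)) : ℝ≥0∞)) :=
        (key 0).symm
    _ = ∑' w : Fin d → ℤ,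
        ((φ (normInf w).toNat : ℝ≥0∞) * (ψ (normInf w).toNat : ℝ≥0∞)) := by
        refine tsum_congr fun w => ?_
        rw [hsimp w, show (0 : Fin d → ℤ) - w = -w from zero_sub w, nnInf_neg]
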